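/- Define F : ℝ² → ℝ by F(x, y) = exp(−4/(16x² + y²)) for (x, y) ≠ (0, 0) and F(0, 0) = 0. Let ρ : (0, ∞) → ℝ be a function, and define φ_ρ : ℝ² → ℝ², identifying ℝ² with ℂ, by φ_ρ(0) = 0 and φ_ρ(z) = e^{iρ(|z|)}·z for z ≠ 0. Suppose there exist sequences of positive real numbers (r_n) and (r'_n) with 0 < r'_n < r_n, r_n → 0, r_n − r'_n < r_n², ρ(r_n) ∈ π/2 + 2πℤ, and ρ(r'_n) ∈ π + 2πℤ for all n. Then no map ψ : ℝ² → ℝ² satisfying F ∘ ψ = F ∘ φ_ρ is Lipschitz continuous. -/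

import Mathlib

open Filter

/-- The function `F(x,y) = exp(−4/(16x² + y²))`, extended by `0` at the origin,
on `ℝ² ≅ ℂ`. -/
noncomputable def ellipticHamiltonian : ℂ → ℝ := fun z =>
  if z = 0 then 0 else Real.exp (-4 / (16 * z.re ^ 2 + z.im ^ 2))

/-- The twist map `φ_ρ(z) = e^{iρ(|z|)}·z` for `z ≠ 0`, with `φ_ρ(0) = 0`. -/
noncomputable def twistMap (ρ : ℝ → ℝ) : ℂ → ℂ := fun z =>
  if z = 0 then 0 else Complex.exp (Complex.I * (ρ ‖z‖ : ℂ)) * z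


noncomputable def Tmap (v : ℂ) : ℂ := ⟨4 * v.re, v.im⟩

lemma Tmap_sub (a b : ℂ) : Tmap (a - b) = Tmap a - Tmap b := by
  apply Complex.ext <;> simp [Tmap] <;> ring

lemma Tmap_norm_sq (v : ℂ) : ‖Tmap v‖ ^ 2 = 16 * v.re ^ 2 + v.im ^ 2 := by
  rw [Complex.sq_norm, Complex.normSq_apply]
  simp [Tmap]; ring

lemma Tmap_norm_le (v : ℂ) : ‖Tmap v‖ ≤ 4 * ‖v‖ := by
  have h1 : ‖Tmap v‖ ^ 2 ≤ (4 * ‖v‖) ^ 2 := by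
    rw [Tmap_norm_sq]
    have : ‖v‖ ^ 2 = v.re ^ 2 + v.im ^ 2 := by
      rw [Complex.sq_norm, Complex.normSq_apply]; ring
    nlinarith [sq_nonneg v.re]
  have h2 : (0:ℝ) ≤ 4 * ‖v‖ := by positivity
  nlinarith [norm_nonneg (Tmap v)]

lemma twist_re_im (ρ : ℝ → ℝ) (s : ℝ) (hs : 0 < s) :
    (twistMap ρ s).re = Real.cos (ρ s) * s ∧ (twistMap ρ s).im = Real.sin (ρ s) * s := by
  have hne : (s : ℂ) ≠ 0 := Complex.ofReal_ne_zero.mpr hs.ne'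
  rw [twistMap]
  simp only [if_neg hne, mul_comm Complex.I]
  constructor <;>
    simp [Complex.mul_re, Complex.mul_im, Complex.exp_ofReal_mul_I_re,
      Complex.exp_ofReal_mul_I_im, abs_of_pos hs]
lemma Qpos (v : ℂ) (hv : v ≠ 0) : 0 < 16 * v.re ^ 2 + v.im ^ 2 := by
  have h := Complex.normSq_pos.mpr hv
  rw [Complex.normSq_apply] at h
  nlinarith [sq_nonneg v.re, sq_nonneg v.im]

theorem no_lipschitz_map_intertwines_twisted_hamiltonian
    (ρ : ℝ → ℝ) (r r' : ℕ → ℝ)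
    (hr'pos : ∀ n, 0 < r' n) (hlt : ∀ n, r' n < r n)
    (hr0 : Tendsto r atTop (nhds 0))
    (hclose : ∀ n, r n - r' n < (r n) ^ 2)
    (hρr : ∀ n, ∃ j : ℤ, ρ (r n) = Real.pi / 2 + 2 * Real.pi * j)
    (hρr' : ∀ n, ∃ j : ℤ, ρ (r' n) = Real.pi + 2 * Real.pi * j)
    (ψ : ℂ → ℂ) (hψ : ellipticHamiltonian ∘ ψ = ellipticHamiltonian ∘ twistMap ρ) :
    ¬ ∃ L : ℝ, 0 < L ∧ ∀ z w : ℂ, ‖ψ z - ψ w‖ ≤ L * ‖z - w‖ := by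
  rintro ⟨L, hL, hlip⟩
  have hrpos : ∀ n, 0 < r n := fun n => (hr'pos n).trans (hlt n)
  -- key: for z ≠ 0, ψ z lies on the same ellipse as twistMap ρ z
  have key : ∀ z : ℂ, z ≠ 0 →
      ‖Tmap (ψ z)‖ ^ 2 = 16 * (twistMap ρ z).re ^ 2 + (twistMap ρ z).im ^ 2 := by
    intro z hz
    have hw : twistMap ρ z ≠ 0 := by
      rw [twistMap]
      simp only [if_neg hz]
      exact mul_ne_zero (Complex.exp_ne_zero _) hz
    have heq : ellipticHamiltonian (ψ z) = ellipticHamiltonian (twistMap ρ z) :=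
      congrFun hψ z
    rw [ellipticHamiltonian, ellipticHamiltonian] at heq
    simp only [if_neg hw] at heq
    have hψz : ψ z ≠ 0 := by
      intro h0
      rw [if_pos h0] at heq
      exact absurd heq.symm (ne_of_gt (Real.exp_pos _))
    rw [if_neg hψz, Real.exp_eq_exp] at heq
    have h1 := Qpos (ψ z) hψz
    have h2 := Qpos (twistMap ρ z) hw
    rw [Tmap_norm_sq]
    field_simp at heq
    linarith
  obtain ⟨n, hn⟩ : ∃ n, r n < 3 / (4 * (L + 1)) :=
    (hr0.eventually (gt_mem_nhds (by positivity))).exists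
  -- trig values
  obtain ⟨j, hj⟩ := hρr n
  obtain ⟨j', hj'⟩ := hρr' n
  have hcs : Real.cos (ρ (r n)) = 0 ∧ Real.sin (ρ (r n)) = 1 := by
    have h : ρ (r n) = Real.pi / 2 + (j : ℝ) * (2 * Real.pi) := by rw [hj]; ring
    rw [h, Real.cos_add_int_mul_two_pi, Real.sin_add_int_mul_two_pi,
      Real.cos_pi_div_two, Real.sin_pi_div_two]
    exact ⟨rfl, rfl⟩
  have hcs' : Real.cos (ρ (r' n)) = -1 ∧ Real.sin (ρ (r' n)) = 0 := by
    have h : ρ (r' n) = Real.pi + (j' : ℝ) * (2 * Real.pi) := by rw [hj']; ring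
    rw [h, Real.cos_add_int_mul_two_pi, Real.sin_add_int_mul_two_pi,
      Real.cos_pi, Real.sin_pi]
    exact ⟨rfl, rfl⟩
  -- norms of Tmap (ψ ·)
  have hzne : ((r n : ℝ) : ℂ) ≠ 0 := Complex.ofReal_ne_zero.mpr (hrpos n).ne'
  have hzne' : ((r' n : ℝ) : ℂ) ≠ 0 := Complex.ofReal_ne_zero.mpr (hr'pos n).ne'
  have hp2 : ‖Tmap (ψ (r n))‖ ^ 2 = (r n) ^ 2 := by
    have h := key _ hzne
    rw [(twist_re_im ρ (r n) (hrpos n)).1, (twist_re_im ρ (r n) (hrpos n)).2,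
      hcs.1, hcs.2] at h
    rw [h]; ring
  have hq2 : ‖Tmap (ψ (r' n))‖ ^ 2 = (4 * r' n) ^ 2 := by
    have h := key _ hzne'
    rw [(twist_re_im ρ (r' n) (hr'pos n)).1, (twist_re_im ρ (r' n) (hr'pos n)).2,
      hcs'.1, hcs'.2] at h
    rw [h]; ring
  have hp : ‖Tmap (ψ (r n))‖ = r n := by
    have h := congrArg Real.sqrt hp2
    rwa [Real.sqrt_sq (norm_nonneg _), Real.sqrt_sq (hrpos n).le] at h
  have hq : ‖Tmap (ψ (r' n))‖ = 4 * r' n := by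
    have h := congrArg Real.sqrt hq2
    rwa [Real.sqrt_sq (norm_nonneg _), Real.sqrt_sq (by linarith [hr'pos n])] at h
  -- chain of inequalities
  have h1 := norm_sub_norm_le (Tmap (ψ (r' n))) (Tmap (ψ (r n)))
  rw [hp, hq, ← Tmap_sub] at h1
  have h2 := Tmap_norm_le (ψ (r' n) - ψ (r n))
  have h3 := hlip ((r' n : ℝ) : ℂ) ((r n : ℝ) : ℂ)
  have h4 : ‖((r' n : ℝ) : ℂ) - ((r n : ℝ) : ℂ)‖ = r n - r' n := by
    rw [← Complex.ofReal_sub, Complex.norm_real, Real.norm_eq_abs, abs_sub_comm,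
      abs_of_pos (by linarith [hlt n])]
  rw [h4] at h3
  have h5 : 4 * (L + 1) * r n < 3 := by
    rw [lt_div_iff₀ (by positivity)] at hn; linarith
  nlinarith [hclose n, hrpos n, hlt n, mul_pos hL (hrpos n)]
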